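/- Let H = H₀ × H₀ and let N be the operator on H with block matrix [[0, 1],[0, 0]]. Define s(b) = b·b*·N·N* + b*·N for b ∈ O_N. Then the set U_N = {b ∈ O_N : s(b) invertible} is an open neighborhood of N in O_N; for every b ∈ U_N one has s(b) ∈ 1 + K(H), the unitary part μ(b) of the polar decomposition s(b) = μ(b)·|s(b)| belongs to U_c(H) and satisfies μ(b)·N·μ(b)* = b; and the map b ↦ μ(b) is continuous on U_N. In particular, π_N : U_c(H) → O_N, π_N(u) = uNu*, has continuous local cross sections around every point of O_N. -/

import Mathlib

set_option linter.unusedSectionVars false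
set_option maxHeartbeats 1000000


noncomputable section
open NormedSpace
open scoped InnerProductSpace

variable {H₀ : Type*} [NormedAddCommGroup H₀] [InnerProductSpace ℂ H₀] [CompleteSpace H₀]

/-- The Hilbert space `H = H₀ × H₀` (with the ℓ²-product inner product). -/
abbrev Hp (H₀ : Type*) [NormedAddCommGroup H₀] : Type _ := WithLp 2 (H₀ × H₀)

/-- The identification `H₀ × H₀ ≃ H`. -/
abbrev ι (H₀ : Type*) [NormedAddCommGroup H₀] : H₀ × H₀ ≃ Hp H₀ :=
  (WithLp.equiv 2 (H₀ × H₀)).symm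

/-- The unitary Fredholm group. -/
def Uc (H : Type*) [NormedAddCommGroup H] [InnerProductSpace ℂ H] [CompleteSpace H] :
    Set (H →L[ℂ] H) :=
  {u | u ∈ unitary (H →L[ℂ] H) ∧ IsCompactOperator ⇑(u - 1)}

/-- The unitary orbit of an operator `N` under the Fredholm group. -/
def orbit {H : Type*} [NormedAddCommGroup H] [InnerProductSpace ℂ H] [CompleteSpace H]
    (N : H →L[ℂ] H) : Set (H →L[ℂ] H) :=
  {b | ∃ u ∈ Uc H, b = u * N * star u}

/-- The map `s(b) = b b* N N* + b* N`. -/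
def sMap {H : Type*} [NormedAddCommGroup H] [InnerProductSpace ℂ H] [CompleteSpace H]
    (N b : H →L[ℂ] H) : H →L[ℂ] H :=
  b * star b * (N * star N) + star b * N

namespace Aux17
section CompactHelpers
variable {H : Type*} [NormedAddCommGroup H] [InnerProductSpace ℂ H] [CompleteSpace H]

variable {H : Type*} [NormedAddCommGroup H] [InnerProductSpace ℂ H] [CompleteSpace H]

lemma cpt_mul_left {T : H →L[ℂ] H} (U : H →L[ℂ] H) (h : IsCompactOperator ⇑T) :
    IsCompactOperator ⇑(U * T) := by
  have := h.clm_comp U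
  have e : ⇑(U * T) = ⇑U ∘ ⇑T := rfl
  rw [e]; exact this

lemma cpt_mul_right {T : H →L[ℂ] H} (U : H →L[ℂ] H) (h : IsCompactOperator ⇑T) :
    IsCompactOperator ⇑(T * U) := by
  have := h.comp_clm U
  have e : ⇑(T * U) = ⇑T ∘ ⇑U := rfl
  rw [e]; exact this

lemma cpt_add {T S : H →L[ℂ] H} (hT : IsCompactOperator ⇑T) (hS : IsCompactOperator ⇑S) :
    IsCompactOperator ⇑(T + S) := by
  have := hT.add hS
  have e : ⇑(T + S) = ⇑T + ⇑S := rfl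
  rw [e]; exact this

lemma cpt_neg {T : H →L[ℂ] H} (hT : IsCompactOperator ⇑T) : IsCompactOperator ⇑(-T) := by
  have := hT.neg
  have e : ⇑(-T) = -⇑T := rfl
  rw [e]; exact this

lemma one_mem_Uc : (1 : H →L[ℂ] H) ∈ Uc H := by
  refine ⟨?_, ?_⟩
  · simp [Unitary.mem_iff]
  · simp only [sub_self]
    have e : ⇑(0 : H →L[ℂ] H) = (0 : H → H) := rfl
    rw [e]; exact isCompactOperator_zero

lemma Uc_mul {u v : H →L[ℂ] H} (hu : u ∈ Uc H) (hv : v ∈ Uc H) : u * v ∈ Uc H := by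
  refine ⟨mul_mem hu.1 hv.1, ?_⟩
  have e : u * v - 1 = u * (v - 1) + (u - 1) := by noncomm_ring
  rw [e]
  exact cpt_add (cpt_mul_left u hv.2) hu.2

lemma Uc_star {u : H →L[ℂ] H} (hu : u ∈ Uc H) : star u ∈ Uc H := by
  refine ⟨Unitary.star_mem hu.1, ?_⟩
  have h1 : star u * u = 1 := (Unitary.mem_iff.mp hu.1).1
  have e : star u - 1 = -(star u * (u - 1)) := by
    rw [mul_sub, h1, mul_one, neg_sub]
  rw [e]
  exact cpt_neg (cpt_mul_left (star u) hu.2)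

lemma N_mem_orbit (N : H →L[ℂ] H) : N ∈ orbit N :=
  ⟨1, one_mem_Uc, by simp⟩

lemma orbit_conj {N b : H →L[ℂ] H} (hb : b ∈ orbit N) {u : H →L[ℂ] H} (hu : u ∈ Uc H) :
    u * b * star u ∈ orbit N := by
  obtain ⟨v, hv, rfl⟩ := hb
  exact ⟨u * v, Uc_mul hu hv, by simp [star_mul, mul_assoc]⟩


end CompactHelpers

section Nids


variable {N : Hp H₀ →L[ℂ] Hp H₀}

open ContinuousLinearMap in
lemma starN_apply (hN : ∀ ξ : H₀ × H₀, N (ι H₀ ξ) = ι H₀ (ξ.2, 0))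
    (x : Hp H₀) : star N x = ι H₀ (0, x.ofLp.1) := by
  have hN' : ∀ v : Hp H₀, N v = ι H₀ (v.ofLp.2, 0) := fun v => hN ((WithLp.equiv 2 _) v)
  refine ext_inner_left ℂ fun v => ?_
  rw [star_eq_adjoint, adjoint_inner_right, hN' v]
  rw [show (⟪(ι H₀ (v.ofLp.2, 0) : Hp H₀), x⟫_ℂ) = ⟪v.ofLp.2, x.ofLp.1⟫_ℂ + ⟪(0 : H₀), x.ofLp.2⟫_ℂ from
    WithLp.prod_inner_apply _ _]
  rw [show (⟪v, (ι H₀ (0, x.ofLp.1) : Hp H₀)⟫_ℂ) = ⟪v.ofLp.1, (0:H₀)⟫_ℂ + ⟪v.ofLp.2, x.ofLp.1⟫_ℂ from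
    WithLp.prod_inner_apply _ _]
  simp

lemma N_apply (hN : ∀ ξ : H₀ × H₀, N (ι H₀ ξ) = ι H₀ (ξ.2, 0))
    (v : Hp H₀) : N v = ι H₀ (v.ofLp.2, 0) := hN ((WithLp.equiv 2 _) v)

lemma N_sq (hN : ∀ ξ : H₀ × H₀, N (ι H₀ ξ) = ι H₀ (ξ.2, 0)) : N * N = 0 := by
  ext x
  simp only [ContinuousLinearMap.mul_apply, ContinuousLinearMap.zero_apply]
  rw [N_apply hN x, N_apply hN _]
  rfl

lemma N_sN_N (hN : ∀ ξ : H₀ × H₀, N (ι H₀ ξ) = ι H₀ (ξ.2, 0)) : N * star N * N = N := by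
  ext x
  simp only [ContinuousLinearMap.mul_apply]
  rw [N_apply hN x, starN_apply hN _, N_apply hN _]
  exact rfl

lemma N_sum (hN : ∀ ξ : H₀ × H₀, N (ι H₀ ξ) = ι H₀ (ξ.2, 0)) :
    N * star N + star N * N = 1 := by
  ext x
  simp only [ContinuousLinearMap.add_apply, ContinuousLinearMap.mul_apply,
    ContinuousLinearMap.one_apply]
  rw [starN_apply hN x, N_apply hN _, N_apply hN x, starN_apply hN _]
  have : (ι H₀ ((ι H₀ (0, x.ofLp.1) : Hp H₀).ofLp.2, 0) + ι H₀ (0, (ι H₀ (x.ofLp.2, 0) : Hp H₀).ofLp.1) : Hp H₀)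
      = ι H₀ ((x.ofLp.1, 0) + (0, x.ofLp.2)) := rfl
  rw [this]
  have : ((x.ofLp.1, (0:H₀)) + ((0:H₀), x.ofLp.2)) = ((x.ofLp.1, x.ofLp.2) : H₀ × H₀) := by simp
  rw [this]
  exact rfl


end Nids

section Sids
variable {H : Type*} [NormedAddCommGroup H] [InnerProductSpace ℂ H] [CompleteSpace H]
variable {N b : H →L[ℂ] H}

/-- Identities satisfied by any element of the orbit. -/
lemma orbit_sq (hN2 : N * N = 0) (hb : b ∈ orbit N) : b * b = 0 := by
  obtain ⟨u, hu, rfl⟩ := hb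
  have h1 : star u * u = 1 := (Unitary.mem_iff.mp hu.1).1
  have : ∀ x : H →L[ℂ] H, star u * (u * x) = x := fun x => by rw [← mul_assoc, h1, one_mul]
  simp only [mul_assoc, this]
  simp only [← mul_assoc, hN2, zero_mul]
  simp

lemma orbit_star (hb' : b = u * N * star u) : star b = u * star N * star u := by
  subst hb'; simp only [star_mul, star_star, mul_assoc]

lemma orbit_bsb (hNsN : N * star N * N = N) (hb : b ∈ orbit N) : b * star b * b = b := by
  obtain ⟨u, hu, rfl⟩ := hb
  have h1 : star u * u = 1 := (Unitary.mem_iff.mp hu.1).1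
  have hstar : star (u * N * star u) = u * star N * star u := orbit_star rfl
  rw [hstar]
  have hc : ∀ x : H →L[ℂ] H, star u * (u * x) = x := fun x => by rw [← mul_assoc, h1, one_mul]
  calc u * N * star u * (u * star N * star u) * (u * N * star u)
      = u * (N * star N * N) * star u := by simp only [mul_assoc, hc]
    _ = u * N * star u := by rw [hNsN]

lemma orbit_sum (hNsum : N * star N + star N * N = 1) (hb : b ∈ orbit N) :
    b * star b + star b * b = 1 := by
  obtain ⟨u, hu, rfl⟩ := hb
  have h1 : star u * u = 1 := (Unitary.mem_iff.mp hu.1).1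
  have h2 : u * star u = 1 := (Unitary.mem_iff.mp hu.1).2
  have hstar : star (u * N * star u) = u * star N * star u := orbit_star rfl
  rw [hstar]
  have hc : ∀ x : H →L[ℂ] H, star u * (u * x) = x := fun x => by rw [← mul_assoc, h1, one_mul]
  calc u * N * star u * (u * star N * star u) + u * star N * star u * (u * N * star u)
      = u * (N * star N + star N * N) * star u := by
        simp only [mul_assoc, hc, mul_add, add_mul]
    _ = 1 := by rw [hNsum, mul_one, h2]

/-- `s(b) N = b s(b)`. -/
lemma s_mul_N (hN2 : N * N = 0) (hNsN : N * star N * N = N)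
    (hb2 : b * b = 0) : sMap N b * N = b * sMap N b := by
  have hNsN_r : ∀ x : H →L[ℂ] H, N * (star N * (N * x)) = N * x := fun x => by
    simp only [← mul_assoc]; rw [hNsN]
  have hNsN_r0 : N * (star N * N) = N := by simpa [mul_assoc] using hNsN
  have hb2' : ∀ x : H →L[ℂ] H, b * (b * x) = 0 := fun x => by
    rw [← mul_assoc, hb2, zero_mul]
  have hN2' : ∀ x : H →L[ℂ] H, N * (N * x) = 0 := fun x => by
    rw [← mul_assoc, hN2, zero_mul]
  simp only [sMap, add_mul, mul_add, mul_assoc, hNsN_r, hNsN_r0, hb2', hN2, hN2',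
    mul_zero, zero_mul, add_zero, zero_add, hb2]

/-- star of `s(b)`. -/
lemma star_sMap : star (sMap N b) = N * star N * (b * star b) + star N * b := by
  simp only [sMap, star_add, star_mul, star_star, mul_assoc]

/-- `N s(b)* = s(b)* b`. -/
lemma N_mul_star_s (hN2 : N * N = 0) (hb2 : b * b = 0) (hbsb : b * star b * b = b) :
    N * star (sMap N b) = star (sMap N b) * b := by
  rw [star_sMap]
  have hN2' : ∀ x : H →L[ℂ] H, N * (N * x) = 0 := fun x => by
    rw [← mul_assoc, hN2, zero_mul]
  have hb2' : ∀ x : H →L[ℂ] H, b * (b * x) = 0 := fun x => by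
    rw [← mul_assoc, hb2, zero_mul]
  have hbsb_r : b * (star b * b) = b := by simpa [mul_assoc] using hbsb
  simp only [mul_add, add_mul, mul_assoc, hN2', hbsb_r, hb2, mul_zero, zero_mul,
    add_zero, zero_add]

/-- `s(N) = 1`. -/
lemma sMap_self (hNsN : N * star N * N = N) (hNsum : N * star N + star N * N = 1) :
    sMap N N = 1 := by
  have h1 : N * star N * (N * star N) = N * star N := by
    rw [← mul_assoc, hNsN]
  rw [sMap, h1, hNsum]

lemma NN_sq (hNsN : N * star N * N = N) :
    N * star N * (N * star N) + star N * N = 1 → sMap N N = 1 := by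
  intro h; exact sMap_self hNsN (by rwa [← mul_assoc, hNsN] at h)

/-- decomposition of `s(b) - 1`. -/
lemma s_sub_one_eq (hNsN : N * star N * N = N) (hNsum : N * star N + star N * N = 1) :
    sMap N b - 1 = (b * star b - N * star N) * (N * star N) + (star b - star N) * N := by
  have hNN1 : N * star N * (N * star N) + star N * N = 1 := by
    rw [← mul_assoc, hNsN]; exact hNsum
  calc sMap N b - 1
      = b * star b * (N * star N) + star b * N
        - (N * star N * (N * star N) + star N * N) := by rw [hNN1, sMap]
    _ = (b * star b - N * star N) * (N * star N) + (star b - star N) * N := by noncomm_ring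

lemma star_s_sub_one_eq (hNsN : N * star N * N = N) (hNsum : N * star N + star N * N = 1) :
    star (sMap N b) - 1 = (N * star N) * (b * star b - N * star N) + star N * (b - N) := by
  have hNN1 : N * star N * (N * star N) + star N * N = 1 := by
    rw [← mul_assoc, hNsN]; exact hNsum
  calc star (sMap N b) - 1
      = N * star N * (b * star b) + star N * b
        - (N * star N * (N * star N) + star N * N) := by rw [hNN1, star_sMap]
    _ = (N * star N) * (b * star b - N * star N) + star N * (b - N) := by noncomm_ring

lemma b_sub_N_compact (hb : b ∈ orbit N) : IsCompactOperator ⇑(b - N) := by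
  obtain ⟨u, hu, rfl⟩ := hb
  have h1 : star u * u = 1 := (Unitary.mem_iff.mp hu.1).1
  have hsu : star u - 1 = -(star u * (u - 1)) := by
    rw [mul_sub, h1, mul_one, neg_sub]
  have e : u * N * star u - N = (u - 1) * (N * star u) + N * (star u - 1) := by noncomm_ring
  rw [e]
  exact cpt_add (cpt_mul_right _ hu.2) (by
    rw [hsu]
    exact cpt_mul_left N (cpt_neg (cpt_mul_left (star u) hu.2)))

lemma star_b_sub_star_N_compact (hb : b ∈ orbit N) : IsCompactOperator ⇑(star b - star N) := by
  obtain ⟨u, hu, hbe⟩ := hb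
  rw [orbit_star hbe]
  have h1 : star u * u = 1 := (Unitary.mem_iff.mp hu.1).1
  have hsu : star u - 1 = -(star u * (u - 1)) := by
    rw [mul_sub, h1, mul_one, neg_sub]
  have e : u * star N * star u - star N
      = (u - 1) * (star N * star u) + star N * (star u - 1) := by noncomm_ring
  rw [e]
  exact cpt_add (cpt_mul_right _ hu.2) (by
    rw [hsu]
    exact cpt_mul_left (star N) (cpt_neg (cpt_mul_left (star u) hu.2)))

lemma bsb_sub_compact (hb : b ∈ orbit N) :
    IsCompactOperator ⇑(b * star b - N * star N) := by
  have e : b * star b - N * star N = (b - N) * star b + N * (star b - star N) := by noncomm_ring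
  rw [e]
  exact cpt_add (cpt_mul_right _ (b_sub_N_compact hb))
    (cpt_mul_left _ (star_b_sub_star_N_compact hb))

lemma s_sub_one_compact (hNsN : N * star N * N = N) (hNsum : N * star N + star N * N = 1)
    (hb : b ∈ orbit N) : IsCompactOperator ⇑(sMap N b - 1) := by
  rw [s_sub_one_eq hNsN hNsum]
  exact cpt_add (cpt_mul_right _ (bsb_sub_compact hb))
    (cpt_mul_right _ (star_b_sub_star_N_compact hb))

lemma star_s_sub_one_compact (hNsN : N * star N * N = N)
    (hNsum : N * star N + star N * N = 1) (hb : b ∈ orbit N) :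
    IsCompactOperator ⇑(star (sMap N b) - 1) := by
  rw [star_s_sub_one_eq hNsN hNsum]
  exact cpt_add (cpt_mul_left _ (bsb_sub_compact hb))
    (cpt_mul_left _ (b_sub_N_compact hb))

end Sids


section CFCfacts
variable {A : Type*} [CStarAlgebra A] [PartialOrder A] [StarOrderedRing A]

lemma mem_elemental_cfc {a : A} (ha : IsSelfAdjoint a) (f : ℝ → ℝ) :
    cfc f a ∈ StarAlgebra.elemental ℂ a := by
  rw [cfc_real_eq_complex f ha]
  refine cfc_cases (· ∈ StarAlgebra.elemental ℂ a) a _ (zero_mem _) fun hf hna => ?_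
  rw [cfcHom_eq_of_isStarNormal]
  exact Subtype.coe_prop _

lemma commute_cfc' {a x : A} (ha : IsSelfAdjoint a) (hx : Commute x a) (f : ℝ → ℝ) :
    Commute x (cfc f a) := by
  suffices h : ∀ y ∈ StarAlgebra.elemental ℂ a, Commute x y from
    h _ (mem_elemental_cfc ha f)
  intro y hy
  refine StarAlgebra.elemental.induction_on ℂ hy
    (P := fun u _ => Commute x u) hx ?_ ?_ ?_ ?_ ?_
  · show Commute x (star a)
    rw [ha.star_eq]; exact hx
  · exact fun r => (Algebra.commutes r x).symm
  · exact fun u _ v _ h1 h2 => h1.add_right h2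
  · exact fun u _ v _ h1 h2 => h1.mul_right h2
  · intro s hs hP v hv
    have hcl : IsClosed {w : A | Commute x w} :=
      isClosed_eq (continuous_mul_left x) (continuous_mul_right x)
    exact (hcl.closure_subset_iff.mpr (fun u hu => hP u hu)) hv
end CFCfacts

section Cont
variable {A : Type*} [CStarAlgebra A] [PartialOrder A] [StarOrderedRing A]

lemma algMap_nonneg {c : ℝ} (hc : 0 ≤ c) : (0 : A) ≤ algebraMap ℝ A c := by
  have h : algebraMap ℝ A c
      = star (algebraMap ℝ A (Real.sqrt c)) * algebraMap ℝ A (Real.sqrt c) := by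
    rw [(IsSelfAdjoint.all (Real.sqrt c)).algebraMap A |>.star_eq, ← map_mul,
      Real.mul_self_sqrt hc]
  rw [h]
  exact star_mul_self_nonneg _

lemma spectrum_lb {x : A} {δ : ℝ} (h : algebraMap ℝ A δ ≤ x) :
    ∀ t ∈ spectrum ℝ x, δ ≤ t := by
  have h0 : 0 ≤ x - algebraMap ℝ A δ := sub_nonneg.mpr h
  have hnn := (StarOrderedRing.nonneg_iff_spectrum_nonneg (R := ℝ) _ (.of_nonneg h0)).mp h0
  intro t ht
  have hmem : t - δ ∈ spectrum ℝ (x - algebraMap ℝ A δ) := by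
    rw [← spectrum.sub_singleton_eq]
    exact Set.sub_mem_sub ht rfl
  linarith [hnn _ hmem]

lemma le_of_spectrum_lb {x : A} (hx : IsSelfAdjoint x) {δ : ℝ}
    (h : ∀ t ∈ spectrum ℝ x, δ ≤ t) : algebraMap ℝ A δ ≤ x := by
  rw [← sub_nonneg]
  have hsa : IsSelfAdjoint (x - algebraMap ℝ A δ) :=
    hx.sub ((IsSelfAdjoint.all δ).algebraMap A)
  rw [StarOrderedRing.nonneg_iff_spectrum_nonneg (R := ℝ) _ hsa]
  intro t ht
  rw [← spectrum.sub_singleton_eq] at ht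
  obtain ⟨u, hu, v, hv, rfl⟩ := ht
  rw [Set.mem_singleton_iff] at hv
  show (0:ℝ) ≤ u - v
  rw [hv]
  linarith [h u hu]

lemma spectrum_ub {x : A} {c : ℝ} (h : x ≤ algebraMap ℝ A c) :
    ∀ t ∈ spectrum ℝ x, t ≤ c := by
  have h0 : 0 ≤ algebraMap ℝ A c - x := sub_nonneg.mpr h
  have hnn := (StarOrderedRing.nonneg_iff_spectrum_nonneg (R := ℝ) _ (.of_nonneg h0)).mp h0
  intro t ht
  have hmem : c - t ∈ spectrum ℝ (algebraMap ℝ A c - x) := by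
    rw [← spectrum.singleton_sub_eq]
    exact Set.sub_mem_sub rfl ht
  linarith [hnn _ hmem]

lemma exists_spectrum_lb {a : A} (ha : 0 ≤ a) (hu : IsUnit a) :
    ∃ δ : ℝ, 0 < δ ∧ ∀ t ∈ spectrum ℝ a, δ ≤ t := by
  by_cases hne : (spectrum ℝ a).Nonempty
  · obtain ⟨t₀, ht₀, hmin⟩ := (spectrum.isCompact a).exists_isLeast hne
    refine ⟨t₀, ?_, fun t ht => hmin ht⟩
    refine lt_of_le_of_ne (spectrum_nonneg_of_nonneg ha ht₀) ?_
    rintro rfl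
    exact (spectrum.zero_notMem_iff ℝ).mpr hu ht₀
  · exact ⟨1, one_pos, fun t ht => absurd ⟨t, ht⟩ hne⟩

/-- Continuity (within the positive cone) of `x ↦ cfc f x` for a globally continuous `f`. -/
lemma cfc_continuousWithinAt_nonneg (f : ℝ → ℝ) (hf : Continuous f) {a₀ : A} (ha₀ : 0 ≤ a₀) :
    ContinuousWithinAt (fun x : A => cfc f x) {x : A | 0 ≤ x} a₀ := by
  rw [Metric.continuousWithinAt_iff]
  intro ε hε
  set M : ℝ := ‖a₀‖ + 1 with hM
  obtain ⟨p, hp⟩ :=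
    exists_polynomial_near_of_continuousOn 0 M f hf.continuousOn (ε/4) (by positivity)
  have hpa : ContinuousAt (fun x : A => (Polynomial.aeval x) p) a₀ :=
    (p.continuous_aeval).continuousAt
  rw [Metric.continuousAt_iff] at hpa
  obtain ⟨δ₁, hδ₁, hδp⟩ := hpa (ε/4) (by positivity)
  have key : ∀ y : A, 0 ≤ y → ‖y‖ ≤ M → ‖cfc f y - (Polynomial.aeval y) p‖ ≤ ε/4 := by
    intro y hy hyM
    have hsay : IsSelfAdjoint y := .of_nonneg hy
    have hub : y ≤ algebraMap ℝ A M := le_trans hsay.le_algebraMap_norm_self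
      (by
        rw [← sub_nonneg, ← map_sub]
        exact algMap_nonneg (by rw [sub_nonneg]; exact hyM))
    have hspecy : ∀ t ∈ spectrum ℝ y, t ∈ Set.Icc (0:ℝ) M := fun t ht =>
      ⟨spectrum_nonneg_of_nonneg hy ht, spectrum_ub hub t ht⟩
    rw [← cfc_polynomial p y hsay,
      ← cfc_sub f (fun t : ℝ => Polynomial.eval t p) y hf.continuousOn (by fun_prop)]
    refine norm_cfc_le (by positivity) fun t ht => ?_
    have h := hp t (hspecy t ht)
    rw [Real.norm_eq_abs, abs_sub_comm]
    linarith [h, abs_nonneg (Polynomial.eval t p - f t)]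
  refine ⟨min δ₁ 1, by positivity, fun {x} hx hdist => ?_⟩
  have hxM : ‖x‖ ≤ M := by
    have h1 : ‖x - a₀‖ < 1 := lt_of_lt_of_le (by rw [← dist_eq_norm]; exact hdist) (min_le_right _ _)
    have he : x - a₀ + a₀ = x := by abel
    calc ‖x‖ = ‖x - a₀ + a₀‖ := by rw [he]
      _ ≤ ‖x - a₀‖ + ‖a₀‖ := norm_add_le _ _
      _ ≤ M := by rw [hM]; linarith
  have ha₀M : ‖a₀‖ ≤ M := by rw [hM]; linarith
  have h1 := key x hx hxM
  have h2 := key a₀ ha₀ ha₀M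
  have h3 : dist ((Polynomial.aeval x) p) ((Polynomial.aeval a₀) p) < ε/4 :=
    hδp (lt_of_lt_of_le hdist (min_le_left _ _))
  calc dist (cfc f x) (cfc f a₀)
      ≤ dist (cfc f x) ((Polynomial.aeval x) p) + dist ((Polynomial.aeval x) p)
          ((Polynomial.aeval a₀) p) + dist ((Polynomial.aeval a₀) p) (cfc f a₀) :=
        dist_triangle4 _ _ _ _
    _ ≤ ε/4 + dist ((Polynomial.aeval x) p) ((Polynomial.aeval a₀) p) + ε/4 := by
        have h2' : dist ((Polynomial.aeval a₀) p) (cfc f a₀) ≤ ε/4 := by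
          rw [dist_eq_norm, norm_sub_rev]; exact h2
        have h1' : dist (cfc f x) ((Polynomial.aeval x) p) ≤ ε/4 := by
          rw [dist_eq_norm]; exact h1
        gcongr
    _ < ε/4 + ε/4 + ε/4 := by gcongr
    _ < ε := by linarith

end Cont

section Mu
variable {H : Type*} [NormedAddCommGroup H] [InnerProductSpace ℂ H] [CompleteSpace H]
variable {N b : H →L[ℂ] H}

/-- The inverse square root function. -/
def invSqrtFun : ℝ → ℝ := fun t => (Real.sqrt t)⁻¹

/-- The unitary part of the polar decomposition of `s(b)`. -/
def muMap (N : H →L[ℂ] H) : (H →L[ℂ] H) → (H →L[ℂ] H) :=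
  fun b => sMap N b * cfc invSqrtFun (star (sMap N b) * sMap N b)

lemma muMap_spec (hN2 : N * N = 0) (hNsN : N * star N * N = N)
    (hNsum : N * star N + star N * N = 1) (hb : b ∈ orbit N) (hs : IsUnit (sMap N b)) :
    muMap N b ∈ Uc H ∧
      (∃ m : H →L[ℂ] H, m.IsPositive ∧ sMap N b = muMap N b * m) ∧
      muMap N b * N * star (muMap N b) = b := by
  have hb2 : b * b = 0 := orbit_sq hN2 hb
  have hbsb : b * star b * b = b := orbit_bsb hNsN hb
  set s : H →L[ℂ] H := sMap N b with hs_def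
  set a : H →L[ℂ] H := star s * s with ha_def
  have ha_nonneg : 0 ≤ a := star_mul_self_nonneg s
  have ha_sa : IsSelfAdjoint a := .of_nonneg ha_nonneg
  have ha_unit : IsUnit a := hs.star.mul hs
  have hspec : ∀ t ∈ spectrum ℝ a, 0 < t := by
    intro t ht
    refine lt_of_le_of_ne (spectrum_nonneg_of_nonneg ha_nonneg ht) ?_
    rintro rfl
    exact (spectrum.zero_notMem_iff ℝ).mpr ha_unit ht
  have hsqrt_cont : ContinuousOn Real.sqrt (spectrum ℝ a) :=
    Real.continuous_sqrt.continuousOn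
  have hsqrt_ne : ∀ t ∈ spectrum ℝ a, Real.sqrt t ≠ 0 := fun t ht =>
    (Real.sqrt_pos.mpr (hspec t ht)).ne'
  have hinv_cont : ContinuousOn invSqrtFun (spectrum ℝ a) := hsqrt_cont.inv₀ hsqrt_ne
  set m : H →L[ℂ] H := cfc Real.sqrt a with hm_def
  set n : H →L[ℂ] H := cfc invSqrtFun a with hn_def
  have hmm : m * m = a := by
    rw [hm_def, ← cfc_mul Real.sqrt Real.sqrt a hsqrt_cont hsqrt_cont]
    rw [cfc_congr (g := fun t : ℝ => t)
      (fun t ht => Real.mul_self_sqrt (hspec t ht).le)]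
    exact cfc_id' ℝ a
  have hmn : m * n = 1 := by
    rw [hm_def, hn_def, ← cfc_mul Real.sqrt invSqrtFun a hsqrt_cont hinv_cont]
    rw [cfc_congr (g := fun _ : ℝ => (1:ℝ)) (fun t ht => by
      simp only [invSqrtFun]; exact mul_inv_cancel₀ (hsqrt_ne t ht))]
    exact cfc_const_one ℝ a
  have hnm : n * m = 1 := by
    rw [hm_def, hn_def, ← cfc_mul invSqrtFun Real.sqrt a hinv_cont hsqrt_cont]
    rw [cfc_congr (g := fun _ : ℝ => (1:ℝ)) (fun t ht => by
      simp only [invSqrtFun]; exact inv_mul_cancel₀ (hsqrt_ne t ht))]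
    exact cfc_const_one ℝ a
  have hn_unit : IsUnit n := ⟨⟨n, m, hnm, hmn⟩, rfl⟩
  have hn_sa : IsSelfAdjoint n := cfc_predicate invSqrtFun a
  have hm_nonneg : 0 ≤ m := cfc_nonneg fun t _ => Real.sqrt_nonneg t
  have hcomm_sN : s * N = b * s := s_mul_N hN2 hNsN hb2
  have hcomm_Ns : N * star s = star s * b := N_mul_star_s hN2 hb2 hbsb
  have hNa : Commute N a := by
    show N * a = a * N
    calc N * (star s * s) = (N * star s) * s := by rw [mul_assoc]
      _ = star s * (b * s) := by rw [hcomm_Ns, mul_assoc]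
      _ = star s * (s * N) := by rw [hcomm_sN]
      _ = (star s * s) * N := by rw [mul_assoc]
  have hNn : Commute N n := commute_cfc' ha_sa hNa invSqrtFun
  have hμ_def : muMap N b = s * n := rfl
  have hstarμ : star (s * n) = n * star s := by rw [star_mul, hn_sa.star_eq]
  have h1 : star (s * n) * (s * n) = 1 := by
    rw [hstarμ]
    calc n * star s * (s * n) = n * (a * n) := by
          rw [ha_def]; simp only [mul_assoc]
      _ = n * (m * (m * n)) := by rw [← hmm]; simp only [mul_assoc]
      _ = 1 := by rw [hmn, mul_one, hnm]
  have hμ_unit : IsUnit (s * n) := hs.mul hn_unit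
  have h2 : (s * n) * star (s * n) = 1 := by
    obtain ⟨u, hu⟩ := hμ_unit
    have hinv : star (s * n) = ↑u⁻¹ := by
      calc star (s * n) = star (s * n) * (↑u * ↑u⁻¹) := by rw [u.mul_inv, mul_one]
        _ = star (s * n) * ((s * n) * ↑u⁻¹) := by rw [hu]
        _ = ↑u⁻¹ := by rw [← mul_assoc, h1, one_mul]
    rw [hinv, ← hu, u.mul_inv]
  have hμ_unitary : (s * n) ∈ unitary (H →L[ℂ] H) := Unitary.mem_iff.mpr ⟨h1, h2⟩
  -- compactness
  have hs1 : IsCompactOperator ⇑(s - 1) := s_sub_one_compact hNsN hNsum hb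
  have hss1 : IsCompactOperator ⇑(star s - 1) := star_s_sub_one_compact hNsN hNsum hb
  have ha1 : IsCompactOperator ⇑(a - 1) := by
    have e : a - 1 = star s * (s - 1) + (star s - 1) := by rw [ha_def]; noncomm_ring
    rw [e]; exact cpt_add (cpt_mul_left _ hs1) hss1
  have hplus_cont : ContinuousOn (fun t : ℝ => (Real.sqrt t + 1)⁻¹) (spectrum ℝ a) := by
    refine ContinuousOn.inv₀ (hsqrt_cont.add continuousOn_const) fun t ht => ?_
    positivity
  have hm1 : IsCompactOperator ⇑(m - 1) := by
    have e1 : m - 1 = cfc (fun t : ℝ => Real.sqrt t - 1) a := by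
      rw [cfc_sub Real.sqrt (fun _ : ℝ => (1:ℝ)) a hsqrt_cont continuousOn_const,
        cfc_const_one ℝ a, hm_def]
    have e2 : a - 1 = cfc (fun t : ℝ => t - 1) a := by
      rw [cfc_sub (fun t : ℝ => t) (fun _ : ℝ => (1:ℝ)) a (by fun_prop) continuousOn_const,
        cfc_const_one ℝ a, cfc_id' ℝ a]
    have e : m - 1 = (a - 1) * cfc (fun t : ℝ => (Real.sqrt t + 1)⁻¹) a := by
      rw [e1, e2, ← cfc_mul (fun t : ℝ => t - 1) (fun t : ℝ => (Real.sqrt t + 1)⁻¹) a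
        (by fun_prop) hplus_cont]
      apply cfc_congr
      intro t ht
      have hsq : Real.sqrt t * Real.sqrt t = t := Real.mul_self_sqrt (hspec t ht).le
      have hne : Real.sqrt t + 1 ≠ 0 := by positivity
      field_simp
      nlinarith [hsq]
    rw [e]; exact cpt_mul_right _ ha1
  have hn1 : IsCompactOperator ⇑(n - 1) := by
    have e : n - 1 = n * (1 - m) := by rw [mul_sub, mul_one, hnm]
    rw [e]
    have h1m : IsCompactOperator ⇑((1:H →L[ℂ] H) - m) := by
      have e2 : (1:H →L[ℂ] H) - m = -(m - 1) := by noncomm_ring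
      rw [e2]; exact cpt_neg hm1
    exact cpt_mul_left _ h1m
  have hμ1 : IsCompactOperator ⇑(s * n - 1) := by
    have e : s * n - 1 = (s - 1) * n + (n - 1) := by noncomm_ring
    rw [e]; exact cpt_add (cpt_mul_right _ hs1) hn1
  -- conjugation identity
  have hμN : (s * n) * N = b * (s * n) := by
    calc s * n * N = s * (N * n) := by rw [mul_assoc, ← hNn.eq]
      _ = (s * N) * n := by rw [mul_assoc]
      _ = b * (s * n) := by rw [hcomm_sN, mul_assoc]
  have hconj : (s * n) * N * star (s * n) = b := by
    rw [hμN, mul_assoc, h2, mul_one]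
  refine ⟨⟨hμ_unitary, hμ1⟩, ⟨m, ?_, ?_⟩, hconj⟩
  · exact (ContinuousLinearMap.nonneg_iff_isPositive m).mp hm_nonneg
  · rw [hμ_def, mul_assoc, hnm, mul_one]

end Mu

section MuCont
variable {H : Type*} [NormedAddCommGroup H] [InnerProductSpace ℂ H] [CompleteSpace H]

lemma sMap_continuous (N : H →L[ℂ] H) : Continuous (fun b : H →L[ℂ] H => sMap N b) := by
  simp only [sMap]
  exact ((continuous_id.mul continuous_star).mul continuous_const).add
    (continuous_star.mul continuous_const)

lemma muMap_continuousOn (N : H →L[ℂ] H) :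
    ContinuousOn (muMap N) {b : H →L[ℂ] H | b ∈ orbit N ∧ IsUnit (sMap N b)} := by
  set E := {b : H →L[ℂ] H | b ∈ orbit N ∧ IsUnit (sMap N b)} with hE
  set g : (H →L[ℂ] H) → (H →L[ℂ] H) := fun b => star (sMap N b) * sMap N b with hg
  have hg_cont : Continuous g :=
    ((sMap_continuous N).star).mul (sMap_continuous N)
  intro b₀ hb₀
  set a₀ := g b₀ with ha₀
  have ha₀_nonneg : 0 ≤ a₀ := star_mul_self_nonneg _
  have ha₀_unit : IsUnit a₀ := (hb₀.2.star).mul hb₀.2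
  obtain ⟨δ, hδ, hlb⟩ := exists_spectrum_lb ha₀_nonneg ha₀_unit
  set ft : ℝ → ℝ := fun t => (Real.sqrt (max t (δ/2)))⁻¹ with hft
  have hft_cont : Continuous ft := by
    apply Continuous.inv₀
    · exact Real.continuous_sqrt.comp (continuous_id.max continuous_const)
    · intro t
      have h : (0:ℝ) < max t (δ/2) := lt_of_lt_of_le (by positivity) (le_max_right _ _)
      exact (Real.sqrt_pos.mpr h).ne'
  have hkey := cfc_continuousWithinAt_nonneg ft hft_cont ha₀_nonneg
  have hmaps : Set.MapsTo g E {x : H →L[ℂ] H | 0 ≤ x} := fun b _ => (star_mul_self_nonneg (sMap N b) : 0 ≤ g b)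
  have hcw : ContinuousWithinAt (fun b => cfc ft (g b)) E b₀ :=
    hkey.comp (hg_cont.continuousWithinAt) hmaps
  have hUopen : IsOpen {b : H →L[ℂ] H | g b ∈ Metric.ball a₀ (δ/2)} :=
    (Metric.isOpen_ball).preimage hg_cont
  have hb₀U : b₀ ∈ {b : H →L[ℂ] H | g b ∈ Metric.ball a₀ (δ/2)} := by
    simp only [Set.mem_setOf_eq, Metric.mem_ball, ← ha₀, dist_self]
    positivity
  have hlow : ∀ b, b ∈ {b : H →L[ℂ] H | g b ∈ Metric.ball a₀ (δ/2)} →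
      ∀ t ∈ spectrum ℝ (g b), δ/2 ≤ t := by
    intro b hbU
    have h1 : algebraMap ℝ (H →L[ℂ] H) δ ≤ a₀ :=
      le_of_spectrum_lb (IsSelfAdjoint.of_nonneg ha₀_nonneg) hlb
    have hsa : IsSelfAdjoint (a₀ - g b) :=
      (IsSelfAdjoint.of_nonneg ha₀_nonneg).sub (.of_nonneg (star_mul_self_nonneg _))
    have h2 : a₀ - g b ≤ algebraMap ℝ (H →L[ℂ] H) ‖a₀ - g b‖ :=
      hsa.le_algebraMap_norm_self
    have h3 : algebraMap ℝ (H →L[ℂ] H) ‖a₀ - g b‖ ≤ algebraMap ℝ (H →L[ℂ] H) (δ/2) := by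
      rw [← sub_nonneg, ← map_sub]
      apply algMap_nonneg
      rw [sub_nonneg]
      have hd : dist (g b) a₀ < δ/2 := hbU
      rw [dist_eq_norm, ← norm_neg, neg_sub] at hd
      exact hd.le
    have h4 : algebraMap ℝ (H →L[ℂ] H) (δ/2) ≤ g b := by
      have h5 : a₀ - g b ≤ algebraMap ℝ (H →L[ℂ] H) (δ/2) := le_trans h2 h3
      calc algebraMap ℝ (H →L[ℂ] H) (δ/2)
          = algebraMap ℝ (H →L[ℂ] H) δ - algebraMap ℝ (H →L[ℂ] H) (δ/2) := by
            rw [← map_sub]; congr 1; ring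
        _ ≤ a₀ - algebraMap ℝ (H →L[ℂ] H) (δ/2) := sub_le_sub_right h1 _
        _ ≤ g b := sub_le_comm.mp h5
    exact spectrum_lb h4
  have hev : ∀ᶠ b in nhdsWithin b₀ E,
      (fun b => cfc invSqrtFun (g b)) b = (fun b => cfc ft (g b)) b := by
    filter_upwards [mem_nhdsWithin_of_mem_nhds (hUopen.mem_nhds hb₀U)] with b hbU
    refine cfc_congr fun t ht => ?_
    show (Real.sqrt t)⁻¹ = (Real.sqrt (max t (δ/2)))⁻¹
    rw [max_eq_left (hlow b hbU t ht)]
  have heq : cfc invSqrtFun (g b₀) = cfc ft (g b₀) := by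
    refine cfc_congr fun t ht => ?_
    show (Real.sqrt t)⁻¹ = (Real.sqrt (max t (δ/2)))⁻¹
    rw [max_eq_left (by linarith [hlb t ht])]
  have hcw2 : ContinuousWithinAt (fun b => cfc invSqrtFun (g b)) E b₀ :=
    hcw.congr_of_eventuallyEq hev heq
  exact ((sMap_continuous N).continuousWithinAt).mul hcw2

end MuCont

end Aux17

/-- Proposition 7.1: `π_N : U_c(H) → O_N` has continuous local cross sections. -/
theorem stmt17 (N : Hp H₀ →L[ℂ] Hp H₀)
    (hN : ∀ ξ : H₀ × H₀, N (ι H₀ ξ) = ι H₀ (ξ.2, 0)) :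
    (N ∈ orbit N ∧ IsUnit (sMap N N)) ∧
    (∃ V : Set (Hp H₀ →L[ℂ] Hp H₀), IsOpen V ∧
      {b ∈ orbit N | IsUnit (sMap N b)} = V ∩ orbit N) ∧
    (∀ b ∈ orbit N, IsUnit (sMap N b) → IsCompactOperator ⇑(sMap N b - 1)) ∧
    (∃ μ : (Hp H₀ →L[ℂ] Hp H₀) → (Hp H₀ →L[ℂ] Hp H₀),
      ContinuousOn μ {b ∈ orbit N | IsUnit (sMap N b)} ∧
      ∀ b ∈ orbit N, IsUnit (sMap N b) →
        μ b ∈ Uc (Hp H₀) ∧ (∃ m : Hp H₀ →L[ℂ] Hp H₀, m.IsPositive ∧ sMap N b = μ b * m) ∧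
          μ b * N * star (μ b) = b) ∧
    (∀ a ∈ orbit N, ∃ (V : Set (Hp H₀ →L[ℂ] Hp H₀)) (σ : (Hp H₀ →L[ℂ] Hp H₀) → (Hp H₀ →L[ℂ] Hp H₀)),
      IsOpen V ∧ a ∈ V ∧ ContinuousOn σ (V ∩ orbit N) ∧
      ∀ b ∈ V ∩ orbit N, σ b ∈ Uc (Hp H₀) ∧ σ b * N * star (σ b) = b) := by
  have hN2 : N * N = 0 := Aux17.N_sq hN
  have hNsN : N * star N * N = N := Aux17.N_sN_N hN
  have hNsum : N * star N + star N * N = 1 := Aux17.N_sum hN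
  have hsNN : sMap N N = 1 := Aux17.sMap_self hNsN hNsum
  refine ⟨⟨Aux17.N_mem_orbit N, hsNN ▸ isUnit_one⟩, ?_, ?_, ?_, ?_⟩
  · -- the open set V
    refine ⟨(fun b => sMap N b) ⁻¹' {x | IsUnit x},
      Units.isOpen.preimage (Aux17.sMap_continuous N), ?_⟩
    ext b
    simp only [Set.mem_sep_iff, Set.mem_inter_iff, Set.mem_preimage, Set.mem_setOf_eq]
    exact and_comm
  · exact fun b hb _ => Aux17.s_sub_one_compact hNsN hNsum hb
  · -- the map μ
    refine ⟨Aux17.muMap N, Aux17.muMap_continuousOn N, ?_⟩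
    intro b hb hs
    exact Aux17.muMap_spec hN2 hNsN hNsum hb hs
  · -- local cross sections
    intro a ha
    obtain ⟨u₀, hu₀, ha_eq⟩ := ha
    have h1 : star u₀ * u₀ = 1 := (Unitary.mem_iff.mp hu₀.1).1
    have h2 : u₀ * star u₀ = 1 := (Unitary.mem_iff.mp hu₀.1).2
    have hcanc : ∀ x : Hp H₀ →L[ℂ] Hp H₀, star u₀ * (u₀ * x) = x := fun x => by
      rw [← mul_assoc, h1, one_mul]
    have hcanc' : ∀ x : Hp H₀ →L[ℂ] Hp H₀, u₀ * (star u₀ * x) = x := fun x => by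
      rw [← mul_assoc, h2, one_mul]
    have hc_cont : Continuous fun x : Hp H₀ →L[ℂ] Hp H₀ => star u₀ * x * u₀ :=
      (continuous_const.mul continuous_id).mul continuous_const
    refine ⟨{x : Hp H₀ →L[ℂ] Hp H₀ | IsUnit (sMap N (star u₀ * x * u₀))},
      fun x => u₀ * Aux17.muMap N (star u₀ * x * u₀), ?_, ?_, ?_, ?_⟩
    · exact Units.isOpen.preimage ((Aux17.sMap_continuous N).comp hc_cont)
    · show IsUnit (sMap N (star u₀ * a * u₀))
      have e : star u₀ * a * u₀ = N := by
        rw [ha_eq]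
        calc star u₀ * (u₀ * N * star u₀) * u₀
            = star u₀ * (u₀ * (N * (star u₀ * u₀))) := by simp only [mul_assoc]
          _ = N := by rw [h1, mul_one, hcanc]
      rw [e, hsNN]
      exact isUnit_one
    · -- continuity of σ
      refine continuousOn_const.mul ((Aux17.muMap_continuousOn N).comp
        (hc_cont.continuousOn) ?_)
      intro x hx
      refine ⟨?_, hx.1⟩
      have := Aux17.orbit_conj hx.2 (Aux17.Uc_star hu₀)
      rwa [star_star] at this
    · intro b hb
      set c : Hp H₀ →L[ℂ] Hp H₀ := star u₀ * b * u₀ with hc_def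
      have hc_orbit : c ∈ orbit N := by
        have := Aux17.orbit_conj hb.2 (Aux17.Uc_star hu₀)
        rwa [star_star] at this
      have hc_unit : IsUnit (sMap N c) := hb.1
      obtain ⟨hμUc, _, hμconj⟩ := Aux17.muMap_spec hN2 hNsN hNsum hc_orbit hc_unit
      refine ⟨Aux17.Uc_mul hu₀ hμUc, ?_⟩
      rw [star_mul]
      calc u₀ * Aux17.muMap N c * N * (star (Aux17.muMap N c) * star u₀)
          = u₀ * (Aux17.muMap N c * N * star (Aux17.muMap N c)) * star u₀ := by
            simp only [mul_assoc]
        _ = u₀ * c * star u₀ := by rw [hμconj]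
        _ = b := by
            rw [hc_def]
            calc u₀ * (star u₀ * b * u₀) * star u₀
                = u₀ * (star u₀ * (b * (u₀ * star u₀))) := by simp only [mul_assoc]
              _ = b := by rw [h2, mul_one, hcanc']
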